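/- Let k be an algebraically closed field of characteristic 0 and H a finitely generated commutative Hopf k-algebra such that ⋂_{n ≥ 0} (ker ε)ⁿ = 0 (this holds in particular when H is the coordinate algebra O(G) of a connected linear algebraic k-group G). Then every partial H-comodule (M, ρ) is global, i.e., ρ is coassociative: (ρ ⊗ H)∘ρ = (M ⊗ Δ)∘ρ, so that (M, ρ) is an ordinary H-comodule. -/
import Mathlib

set_option synthInstance.maxHeartbeats 1000000
set_option maxHeartbeats 1000000


open TensorProduct CategoryTheory CategoryTheory.Limits

noncomputable section

universe u

variable (k : Type u) [Field k] (H : Type u) [Ring H] [HopfAlgebra k H]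

/-- Multiply the last two tensor factors using the multiplication of `H`. -/
def mulLast (X : Type u) [AddCommGroup X] [Module k X] :
    ((X ⊗[k] H) ⊗[k] H) →ₗ[k] X ⊗[k] H :=
  (LinearMap.lTensor X (LinearMap.mul' k H)) ∘ₗ (TensorProduct.assoc k X H H).toLinearMap

/-- Comultiply the last tensor factor using the comultiplication of `H`. -/
def comulLast (X : Type u) [AddCommGroup X] [Module k X] :
    (X ⊗[k] H) →ₗ[k] (X ⊗[k] H) ⊗[k] H :=
  (TensorProduct.assoc k X H H).symm.toLinearMap ∘ₗ LinearMap.lTensor X Coalgebra.comul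

/-- Apply the antipode to the last tensor factor. -/
def antLast (X : Type u) [AddCommGroup X] [Module k X] :
    (X ⊗[k] H) →ₗ[k] X ⊗[k] H :=
  LinearMap.lTensor X (HopfAlgebra.antipode (R := k) (A := H))

/-- Apply the counit to the last tensor factor. -/
def counitLast (X : Type u) [AddCommGroup X] [Module k X] :
    (X ⊗[k] H) →ₗ[k] X :=
  (TensorProduct.rid k X).toLinearMap ∘ₗ LinearMap.lTensor X Coalgebra.counit

variable {M : Type u} [AddCommGroup M] [Module k M]

/-- `(M, ρ)` is a (right, algebraic) partial `H`-comodule: (PCM1) `ρ` is counital,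
(PCM2) and (PCM3) express partial coassociativity. -/
structure IsPartialComodule (ρ : M →ₗ[k] M ⊗[k] H) : Prop where
  counit : counitLast k H M ∘ₗ ρ = LinearMap.id
  pcm2 :
    mulLast k H (M ⊗[k] H) ∘ₗ antLast k H ((M ⊗[k] H) ⊗[k] H) ∘ₗ
        LinearMap.rTensor H (comulLast k H M) ∘ₗ LinearMap.rTensor H ρ ∘ₗ ρ =
    mulLast k H (M ⊗[k] H) ∘ₗ antLast k H ((M ⊗[k] H) ⊗[k] H) ∘ₗ
        LinearMap.rTensor H (LinearMap.rTensor H ρ) ∘ₗ LinearMap.rTensor H ρ ∘ₗ ρ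
  pcm3 :
    LinearMap.rTensor H (mulLast k H M) ∘ₗ LinearMap.rTensor H (antLast k H (M ⊗[k] H)) ∘ₗ
        comulLast k H (M ⊗[k] H) ∘ₗ LinearMap.rTensor H ρ ∘ₗ ρ =
    LinearMap.rTensor H (mulLast k H M) ∘ₗ LinearMap.rTensor H (antLast k H (M ⊗[k] H)) ∘ₗ
        LinearMap.rTensor H (LinearMap.rTensor H ρ) ∘ₗ LinearMap.rTensor H ρ ∘ₗ ρ


section AuxLemmas

open LinearMap Coalgebra HopfAlgebra

variable {X Y : Type u} [AddCommGroup X] [Module k X] [AddCommGroup Y] [Module k Y]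

@[simp] lemma mulLast_tmul (x : X) (g h : H) :
    mulLast k H X ((x ⊗ₜ[k] g) ⊗ₜ[k] h) = x ⊗ₜ[k] (g * h) := by
  simp [mulLast, LinearMap.mul'_apply]

@[simp] lemma antLast_tmul (w : X) (h : H) :
    antLast k H X (w ⊗ₜ[k] h) = w ⊗ₜ[k] (antipode (R := k) h) := by
  simp [antLast]

@[simp] lemma counitLast_tmul (w : X) (h : H) :
    counitLast k H X (w ⊗ₜ[k] h) = counit (R := k) h • w := by
  simp [counitLast]

lemma comulLast_tmul (w : X) (h : H) :
    comulLast k H X (w ⊗ₜ[k] h)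
      = (TensorProduct.assoc k X H H).symm (w ⊗ₜ[k] comul (R := k) h) := by
  simp [comulLast]

lemma mulLast_one (z : X ⊗[k] H) : mulLast k H X (z ⊗ₜ[k] (1 : H)) = z := by
  induction z using TensorProduct.induction_on with
  | zero => simp
  | tmul x g => simp
  | add a b ha hb => rw [add_tmul, map_add, ha, hb]

lemma mulLast_mulLast (z : X ⊗[k] H) (a b : H) :
    mulLast k H X ((mulLast k H X (z ⊗ₜ[k] a)) ⊗ₜ[k] b)
      = mulLast k H X (z ⊗ₜ[k] (a * b)) := by
  induction z using TensorProduct.induction_on with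
  | zero => simp
  | tmul x g => simp [mul_assoc]
  | add s t hs ht =>
      rw [add_tmul, map_add, add_tmul, map_add, hs, ht, add_tmul, map_add]

lemma mulLast_natural (f : X →ₗ[k] Y) :
    mulLast k H Y ∘ₗ rTensor H (rTensor H f) = rTensor H f ∘ₗ mulLast k H X := by
  apply TensorProduct.ext_threefold
  intro x g h
  simp

lemma antLast_natural (f : X →ₗ[k] Y) :
    antLast k H Y ∘ₗ rTensor H f = rTensor H f ∘ₗ antLast k H X := by
  simp [antLast, lTensor_comp_rTensor, rTensor_comp_lTensor]

lemma counitLast_natural (f : X →ₗ[k] Y) :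
    counitLast k H Y ∘ₗ rTensor H f = f ∘ₗ counitLast k H X := by
  apply TensorProduct.ext'
  intro x h
  simp

lemma assoc_symm_natural (f : X →ₗ[k] Y) (x : X) (t : H ⊗[k] H) :
    (TensorProduct.assoc k Y H H).symm (f x ⊗ₜ[k] t)
      = rTensor H (rTensor H f) ((TensorProduct.assoc k X H H).symm (x ⊗ₜ[k] t)) := by
  induction t using TensorProduct.induction_on with
  | zero => simp
  | tmul a b => simp
  | add s t hs ht => rw [tmul_add, map_add, hs, tmul_add, map_add, map_add, ht]

lemma comulLast_natural (f : X →ₗ[k] Y) :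
    comulLast k H Y ∘ₗ rTensor H f = rTensor H (rTensor H f) ∘ₗ comulLast k H X := by
  apply TensorProduct.ext'
  intro x h
  simp only [LinearMap.coe_comp, Function.comp_apply, rTensor_tmul, comulLast_tmul]
  exact assoc_symm_natural k H f x _

lemma counitLast_mulLast (y : X ⊗[k] H) (c : H) :
    counitLast k H X (mulLast k H X (y ⊗ₜ[k] c))
      = counit (R := k) c • counitLast k H X y := by
  induction y using TensorProduct.induction_on with
  | zero => simp
  | tmul x g => simp [Bialgebra.counit_mul, smul_smul, mul_comm]
  | add s t hs ht => rw [add_tmul, map_add, map_add, hs, ht, map_add, smul_add]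

end AuxLemmas

section Chunk2

open LinearMap Coalgebra HopfAlgebra

variable {M : Type u} [AddCommGroup M] [Module k M]

lemma counit_antipode (h : H) :
    counit (R := k) (antipode (R := k) (A := H) h) = counit (R := k) h := by
  have key : ∀ t : H ⊗[k] H,
      counit (R := k) (mul' k H (rTensor H (antipode (R := k) (A := H)) t))
        = counit (R := k) (antipode (R := k) (A := H)
            ((TensorProduct.rid k H) (lTensor H (counit (R := k)) t))) := by
    intro t
    induction t using TensorProduct.induction_on with
    | zero => simp
    | tmul a b =>
        simp [Bialgebra.counit_mul, LinearMap.mul'_apply, TensorProduct.rid_tmul,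
          map_smul, smul_eq_mul, mul_comm]
    | add s t hs ht => simp only [map_add, hs, ht]
  have h1 := key (comul (R := k) h)
  rw [HopfAlgebra.mul_antipode_rTensor_comul_apply] at h1
  have h2 : lTensor H (counit (R := k) (A := H)) (comul (R := k) h) = h ⊗ₜ[k] (1 : k) := by
    have := LinearMap.congr_fun (Coalgebra.lTensor_counit_comp_comul (R := k) (A := H)) h
    simpa using this
  rw [h2] at h1
  simpa using h1.symm

def uMap : (M ⊗[k] H) ⊗[k] H →ₗ[k] (M ⊗[k] H) ⊗[k] H :=
  rTensor H (mulLast k H M) ∘ₗ rTensor H (antLast k H (M ⊗[k] H))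
    ∘ₗ comulLast k H (M ⊗[k] H)

def u'Map : (M ⊗[k] H) ⊗[k] H →ₗ[k] (M ⊗[k] H) ⊗[k] H :=
  rTensor H (mulLast k H M) ∘ₗ comulLast k H (M ⊗[k] H)

lemma u'_comp_u : u'Map k H (M := M) ∘ₗ uMap k H (M := M) = LinearMap.id := by
  apply TensorProduct.ext'
  intro z h
  -- auxiliary maps
  set wz : H →ₗ[k] M ⊗[k] H :=
    mulLast k H M ∘ₗ TensorProduct.mk k (M ⊗[k] H) H z ∘ₗ antipode (R := k) with hwz
  set qz : H ⊗[k] H →ₗ[k] M ⊗[k] H := mulLast k H M ∘ₗ rTensor H wz with hqz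
  set mz : H →ₗ[k] M ⊗[k] H := mulLast k H M ∘ₗ TensorProduct.mk k (M ⊗[k] H) H z with hmz
  set Xi : H ⊗[k] (H ⊗[k] H) →ₗ[k] (M ⊗[k] H) ⊗[k] H :=
    rTensor H qz ∘ₗ (TensorProduct.assoc k H H H).symm.toLinearMap with hXi
  have claim2 : ∀ (a : H) (s : H ⊗[k] H),
      rTensor H (mulLast k H M)
          ((TensorProduct.assoc k (M ⊗[k] H) H H).symm (wz a ⊗ₜ[k] s))
        = rTensor H qz ((TensorProduct.assoc k H H H).symm (a ⊗ₜ[k] s)) := by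
    intro a s
    induction s using TensorProduct.induction_on with
    | zero => simp
    | tmul c d => simp [hqz]
    | add s t hs ht => simp only [TensorProduct.tmul_add, map_add, hs, ht]
  have claim1 : ∀ t : H ⊗[k] H,
      u'Map k H (M := M) ((rTensor H (mulLast k H M))
          ((rTensor H (antLast k H (M ⊗[k] H)))
            ((TensorProduct.assoc k (M ⊗[k] H) H H).symm (z ⊗ₜ[k] t))))
        = Xi (lTensor H (comul (R := k)) t) := by
    intro t
    induction t using TensorProduct.induction_on with
    | zero => simp
    | tmul a b =>
        have : u'Map k H (M := M) ((mulLast k H M (z ⊗ₜ[k] antipode (R := k) a)) ⊗ₜ[k] b)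
            = rTensor H (mulLast k H M)
                ((TensorProduct.assoc k (M ⊗[k] H) H H).symm
                  (wz a ⊗ₜ[k] comul (R := k) b)) := by
          simp [u'Map, comulLast_tmul, hwz]
        simp only [TensorProduct.assoc_symm_tmul, rTensor_tmul, antLast_tmul,
          mulLast_tmul, lTensor_tmul, hXi]
        rw [this, claim2]
        simp
    | add s t hs ht => simp only [TensorProduct.tmul_add, map_add, hs, ht]
  have claim3 : ∀ s : (H ⊗[k] H) ⊗[k] H,
      Xi ((TensorProduct.assoc k H H H) s)
        = rTensor H mz
            (rTensor H (mul' k H ∘ₗ rTensor H (antipode (R := k) (A := H))) s) := by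
    intro s
    induction s using TensorProduct.induction_on with
    | zero => simp only [map_zero]
    | tmul t' d =>
        induction t' using TensorProduct.induction_on with
        | zero => simp
        | tmul a c =>
            simp only [TensorProduct.assoc_tmul, hXi, LinearMap.coe_comp,
              Function.comp_apply, LinearEquiv.coe_coe, TensorProduct.assoc_symm_tmul,
              rTensor_tmul, LinearMap.mul'_apply]
            simp only [hqz, hwz, hmz, LinearMap.coe_comp, Function.comp_apply,
              rTensor_tmul, TensorProduct.mk_apply]
            rw [mulLast_mulLast]
        | add s t hs ht => simp only [TensorProduct.add_tmul, map_add, hs, ht]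
    | add s t hs ht => simp only [map_add, hs, ht]
  -- assemble
  have hu : uMap k H (M := M) (z ⊗ₜ[k] h)
      = (rTensor H (mulLast k H M)) ((rTensor H (antLast k H (M ⊗[k] H)))
          ((TensorProduct.assoc k (M ⊗[k] H) H H).symm (z ⊗ₜ[k] comul (R := k) h))) := by
    simp [uMap, comulLast_tmul]
  rw [LinearMap.comp_apply, hu, claim1, ← Coalgebra.coassoc_apply, claim3]
  have step : rTensor H (mul' k H ∘ₗ rTensor H (antipode (R := k) (A := H)))
      (rTensor H (comul (R := k) (A := H)) (comul (R := k) h)) = (1 : H) ⊗ₜ[k] h := by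
    rw [← LinearMap.comp_apply, ← rTensor_comp]
    have hopf : ((mul' k H ∘ₗ rTensor H (antipode (R := k) (A := H)))
        ∘ₗ comul (R := k)) = Algebra.linearMap k H ∘ₗ counit := by
      rw [LinearMap.comp_assoc]
      exact HopfAlgebra.mul_antipode_rTensor_comul
    rw [hopf, rTensor_comp, LinearMap.comp_apply]
    have hcu : rTensor H (counit (R := k) (A := H)) (comul (R := k) h)
        = (1 : k) ⊗ₜ[k] h := by
      have := LinearMap.congr_fun (Coalgebra.rTensor_counit_comp_comul (R := k) (A := H)) h
      simpa using this
    rw [hcu]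
    simp
  rw [step]
  simp only [rTensor_tmul, hmz, LinearMap.coe_comp, Function.comp_apply,
    TensorProduct.mk_apply, mulLast_one, LinearMap.id_coe, id_eq]

end Chunk2


section Chunk3

open LinearMap Coalgebra HopfAlgebra

variable {X : Type u} [AddCommGroup X] [Module k X]
variable {M : Type u} [AddCommGroup M] [Module k M]

lemma counitLast_mulLast_comp :
    counitLast k H X ∘ₗ mulLast k H X
      = counitLast k H X ∘ₗ counitLast k H (X ⊗[k] H) := by
  apply TensorProduct.ext_threefold
  intro x g h
  simp [Bialgebra.counit_mul, smul_smul, mul_comm]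

lemma counitLast_antLast :
    counitLast k H X ∘ₗ antLast k H X = counitLast k H X := by
  apply TensorProduct.ext'
  intro x h
  simp [counit_antipode]

lemma counitLast_comulLast_comp :
    counitLast k H (X ⊗[k] H) ∘ₗ comulLast k H X = LinearMap.id := by
  apply TensorProduct.ext'
  intro x h
  have claim : ∀ t : H ⊗[k] H,
      counitLast k H (X ⊗[k] H) ((TensorProduct.assoc k X H H).symm (x ⊗ₜ[k] t))
        = lTensor X ((TensorProduct.rid k H).toLinearMap
            ∘ₗ lTensor H (counit (R := k) (A := H))) (x ⊗ₜ[k] t) := by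
    intro t
    induction t using TensorProduct.induction_on with
    | zero => simp
    | tmul a b => simp [TensorProduct.tmul_smul, TensorProduct.smul_tmul']
    | add s t hs ht => simp only [TensorProduct.tmul_add, map_add, hs, ht]
  simp only [LinearMap.coe_comp, Function.comp_apply, comulLast_tmul, claim]
  have h2 : lTensor H (counit (R := k) (A := H)) (comul (R := k) h) = h ⊗ₜ[k] (1 : k) := by
    have := LinearMap.congr_fun (Coalgebra.lTensor_counit_comp_comul (R := k) (A := H)) h
    simpa using this
  simp [h2]

def aMap : (M ⊗[k] H) ⊗[k] H →ₗ[k] (M ⊗[k] H) ⊗[k] H :=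
  mulLast k H (M ⊗[k] H) ∘ₗ antLast k H ((M ⊗[k] H) ⊗[k] H)
    ∘ₗ rTensor H (comulLast k H M)

variable (ρ : M →ₗ[k] M ⊗[k] H)

def eMap : M →ₗ[k] M ⊗[k] H :=
  mulLast k H M ∘ₗ antLast k H (M ⊗[k] H) ∘ₗ rTensor H ρ ∘ₗ ρ

def PMap : M ⊗[k] H →ₗ[k] M ⊗[k] H := mulLast k H M ∘ₗ rTensor H (eMap k H ρ)

variable {ρ}

lemma pcm3' (hρ : IsPartialComodule k H ρ) :
    uMap k H (M := M) ∘ₗ rTensor H ρ ∘ₗ ρ = rTensor H (eMap k H ρ) ∘ₗ ρ := by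
  have h3 := hρ.pcm3
  simp only [uMap, eMap, rTensor_comp, LinearMap.comp_assoc] at h3 ⊢
  exact h3

lemma u'_rTensor_e :
    u'Map k H (M := M) ∘ₗ rTensor H (eMap k H ρ)
      = rTensor H (PMap k H ρ) ∘ₗ comulLast k H M := by
  apply TensorProduct.ext'
  intro x h
  have claim : ∀ t : H ⊗[k] H,
      rTensor H (mulLast k H M)
          ((TensorProduct.assoc k (M ⊗[k] H) H H).symm (eMap k H ρ x ⊗ₜ[k] t))
        = rTensor H (PMap k H ρ) ((TensorProduct.assoc k M H H).symm (x ⊗ₜ[k] t)) := by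
    intro t
    induction t using TensorProduct.induction_on with
    | zero => simp
    | tmul a b => simp [PMap]
    | add s t hs ht => simp only [TensorProduct.tmul_add, map_add, hs, ht]
  simp only [LinearMap.coe_comp, Function.comp_apply, rTensor_tmul, comulLast_tmul,
    u'Map, claim]

lemma pcm2' (hρ : IsPartialComodule k H ρ) :
    aMap k H (M := M) ∘ₗ rTensor H ρ ∘ₗ ρ = rTensor H ρ ∘ₗ eMap k H ρ := by
  have h2 := hρ.pcm2
  have nat : (mulLast k H (M ⊗[k] H) ∘ₗ antLast k H ((M ⊗[k] H) ⊗[k] H))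
      ∘ₗ rTensor H (rTensor H ρ)
      = (rTensor H ρ ∘ₗ mulLast k H M) ∘ₗ antLast k H (M ⊗[k] H) := by
    rw [LinearMap.comp_assoc, antLast_natural k H (rTensor H ρ), ← LinearMap.comp_assoc,
      mulLast_natural k H ρ]
  simp only [aMap, eMap, ← LinearMap.comp_assoc] at h2 ⊢
  rw [h2, nat]

lemma counitLast_aMap :
    counitLast k H (M ⊗[k] H) ∘ₗ aMap k H (M := M) = counitLast k H (M ⊗[k] H) := by
  apply TensorProduct.ext'
  intro w h
  have : aMap k H (M := M) (w ⊗ₜ[k] h)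
      = mulLast k H (M ⊗[k] H) ((comulLast k H M w) ⊗ₜ[k] antipode (R := k) h) := by
    simp [aMap]
  rw [LinearMap.coe_comp, Function.comp_apply, this, counitLast_mulLast,
    counit_antipode]
  have := LinearMap.congr_fun (counitLast_comulLast_comp k H (X := M)) w
  simp only [LinearMap.coe_comp, Function.comp_apply, LinearMap.id_coe, id_eq] at this
  rw [this]
  simp

lemma counitLast_eMap (hρ : IsPartialComodule k H ρ) :
    counitLast k H M ∘ₗ eMap k H ρ = LinearMap.id := by
  calc counitLast k H M ∘ₗ eMap k H ρ
      = ((counitLast k H M ∘ₗ mulLast k H M) ∘ₗ antLast k H (M ⊗[k] H))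
          ∘ₗ (rTensor H ρ ∘ₗ ρ) := by simp only [eMap, LinearMap.comp_assoc]
    _ = ((counitLast k H M ∘ₗ counitLast k H (M ⊗[k] H)) ∘ₗ antLast k H (M ⊗[k] H))
          ∘ₗ (rTensor H ρ ∘ₗ ρ) := by rw [counitLast_mulLast_comp]
    _ = (counitLast k H M ∘ₗ (counitLast k H (M ⊗[k] H) ∘ₗ antLast k H (M ⊗[k] H)))
          ∘ₗ (rTensor H ρ ∘ₗ ρ) := by simp only [LinearMap.comp_assoc]
    _ = counitLast k H M ∘ₗ ((counitLast k H (M ⊗[k] H) ∘ₗ rTensor H ρ) ∘ₗ ρ) := by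
          rw [counitLast_antLast]; simp only [LinearMap.comp_assoc]
    _ = counitLast k H M ∘ₗ ((ρ ∘ₗ counitLast k H M) ∘ₗ ρ) := by
          rw [counitLast_natural]
    _ = (counitLast k H M ∘ₗ ρ) ∘ₗ (counitLast k H M ∘ₗ ρ) := by
          simp only [LinearMap.comp_assoc]
    _ = LinearMap.id := by rw [hρ.counit]; simp

lemma rTensor_rho_rho (hρ : IsPartialComodule k H ρ) :
    rTensor H ρ ∘ₗ ρ = rTensor H (PMap k H ρ) ∘ₗ comulLast k H M ∘ₗ ρ := by
  have : rTensor H ρ ∘ₗ ρ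
      = (u'Map k H (M := M) ∘ₗ uMap k H (M := M)) ∘ₗ rTensor H ρ ∘ₗ ρ := by
    rw [u'_comp_u]; simp
  rw [this, LinearMap.comp_assoc, pcm3' k H hρ, ← LinearMap.comp_assoc,
    u'_rTensor_e, LinearMap.comp_assoc]

lemma P_rho (hρ : IsPartialComodule k H ρ) : PMap k H ρ ∘ₗ ρ = ρ := by
  have step1 : ρ = counitLast k H (M ⊗[k] H) ∘ₗ rTensor H ρ ∘ₗ eMap k H ρ := by
    rw [← LinearMap.comp_assoc, counitLast_natural, LinearMap.comp_assoc,
      counitLast_eMap k H hρ]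
    simp
  have key : counitLast k H (M ⊗[k] H) ∘ₗ aMap k H (M := M)
      ∘ₗ rTensor H (PMap k H ρ) ∘ₗ comulLast k H M ∘ₗ ρ = PMap k H ρ ∘ₗ ρ := by
    simp only [← LinearMap.comp_assoc]
    rw [counitLast_aMap k H (M := M), counitLast_natural k H (PMap k H ρ)]
    simp only [LinearMap.comp_assoc]
    have absorb : counitLast k H (M ⊗[k] H) ∘ₗ comulLast k H M ∘ₗ ρ = ρ := by
      rw [← LinearMap.comp_assoc, counitLast_comulLast_comp]
      simp
    rw [absorb]
  have final : PMap k H ρ ∘ₗ ρ = counitLast k H (M ⊗[k] H) ∘ₗ rTensor H ρ ∘ₗ eMap k H ρ := by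
    rw [← pcm2' k H hρ, rTensor_rho_rho k H hρ, key]
  rw [final]
  exact step1.symm

end Chunk3


section Chunk4

open LinearMap Coalgebra HopfAlgebra

variable {X : Type u} [AddCommGroup X] [Module k X]
variable {M : Type u} [AddCommGroup M] [Module k M]

def unitLast (X : Type u) [AddCommGroup X] [Module k X] : X →ₗ[k] X ⊗[k] H :=
  (TensorProduct.mk k X H).flip 1

@[simp] lemma unitLast_apply (x : X) : unitLast k H X x = x ⊗ₜ[k] (1 : H) := rfl

lemma mulLast_rTensor_unitLast :
    mulLast k H X ∘ₗ rTensor H (unitLast k H X) = LinearMap.id := by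
  apply TensorProduct.ext'
  intro x h
  simp

variable (ρ : M →ₗ[k] M ⊗[k] H)

def gMap : M →ₗ[k] M ⊗[k] H := eMap k H ρ - unitLast k H M

def nuMap : M →ₗ[k] M ⊗[k] H := ρ - unitLast k H M

variable {ρ}

lemma PMap_expand :
    PMap k H ρ = LinearMap.id + mulLast k H M ∘ₗ rTensor H (gMap k H ρ) := by
  have he : eMap k H ρ = unitLast k H M + gMap k H ρ := by
    rw [gMap]; abel
  rw [PMap, he, rTensor_add, LinearMap.comp_add, mulLast_rTensor_unitLast]

lemma mulLast_g_rho (hρ : IsPartialComodule k H ρ) :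
    mulLast k H M ∘ₗ rTensor H (gMap k H ρ) ∘ₗ ρ = 0 := by
  have hP := P_rho k H hρ
  rw [PMap_expand, LinearMap.add_comp, LinearMap.id_comp] at hP
  have := add_eq_left.mp hP
  rw [LinearMap.comp_assoc] at this
  exact this

lemma g_apply (hρ : IsPartialComodule k H ρ) (m : M) :
    gMap k H ρ m = -(mulLast k H M (rTensor H (gMap k H ρ) (nuMap k H ρ m))) := by
  have h0 : mulLast k H M (rTensor H (gMap k H ρ) (ρ m)) = 0 := by
    have := LinearMap.congr_fun (mulLast_g_rho k H hρ) m
    simpa using this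
  have h1 : nuMap k H ρ m = ρ m - m ⊗ₜ[k] (1 : H) := by simp [nuMap]
  rw [h1, map_sub, map_sub, h0, rTensor_tmul, mulLast_one]
  abel

end Chunk4

section Chunk5

open LinearMap Coalgebra HopfAlgebra

variable (A : Type u) [CommRing A] [HopfAlgebra k A]
variable {M : Type u} [AddCommGroup M] [Module k M]

def Jaug : Ideal A := RingHom.ker (Bialgebra.counitAlgHom k A)

def WSub (n : ℕ) : Submodule k (M ⊗[k] A) :=
  LinearMap.range (lTensor M (Submodule.restrictScalars k ((Jaug k A) ^ n)).subtype)

lemma mem_WSub_zero (t : M ⊗[k] A) : t ∈ WSub k A (M := M) 0 := by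
  have hsurj : Function.Surjective
      (Submodule.restrictScalars k ((Jaug k A) ^ 0)).subtype := by
    intro y
    refine ⟨⟨y, ?_⟩, rfl⟩
    simp [pow_zero, Ideal.one_eq_top]
  exact LinearMap.lTensor_surjective M hsurj t

lemma mulLast_mem_WSub {n : ℕ} {y : M ⊗[k] A} (hy : y ∈ WSub k A (M := M) n)
    {c : A} (hc : c ∈ Jaug k A) :
    mulLast k A M (y ⊗ₜ[k] c) ∈ WSub k A (M := M) (n + 1) := by
  obtain ⟨t, rfl⟩ := hy
  induction t using TensorProduct.induction_on with
  | zero => simp only [map_zero, TensorProduct.zero_tmul]; exact (WSub k A (n+1)).zero_mem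
  | tmul x w =>
      have hmem : (w : A) * c ∈ (Jaug k A) ^ (n + 1) := by
        rw [pow_succ]
        exact Ideal.mul_mem_mul w.2 hc
      refine ⟨x ⊗ₜ[k] (⟨(w : A) * c, hmem⟩ :
        Submodule.restrictScalars k ((Jaug k A) ^ (n+1))), ?_⟩
      simp
  | add s t hs ht =>
      rw [map_add, TensorProduct.add_tmul, map_add]
      exact (WSub k A (n+1)).add_mem hs ht

lemma rTensor_g_mem_WSub {g : M →ₗ[k] M ⊗[k] A} {n : ℕ}
    (hg : ∀ m, g m ∈ WSub k A (M := M) n)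
    {s : M ⊗[k] A} (hs : s ∈ WSub k A (M := M) 1) :
    mulLast k A M (rTensor A g s) ∈ WSub k A (M := M) (n + 1) := by
  obtain ⟨t, rfl⟩ := hs
  induction t using TensorProduct.induction_on with
  | zero => simp only [map_zero]; exact (WSub k A (n+1)).zero_mem
  | tmul x w =>
      have h1 : lTensor M (Submodule.restrictScalars k ((Jaug k A) ^ 1)).subtype
          (x ⊗ₜ[k] w) = x ⊗ₜ[k] (w : A) := rfl
      rw [h1, rTensor_tmul]
      have hw : (w : A) ∈ Jaug k A := by
        exact Ideal.pow_le_self one_ne_zero w.2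
      exact mulLast_mem_WSub k A (hg x) hw
  | add s t hs ht =>
      rw [map_add, map_add, map_add]
      exact (WSub k A (n+1)).add_mem hs ht

lemma eq_zero_of_mem_all_WSub (hker : (⨅ n : ℕ, (Jaug k A) ^ n) = ⊥)
    {t : M ⊗[k] A} (ht : ∀ n, t ∈ WSub k A (M := M) n) : t = 0 := by
  classical
  set b := Module.Basis.ofVectorSpace k M with hb
  set E : M ⊗[k] A ≃ₗ[k] (Module.Basis.ofVectorSpaceIndex k M →₀ A) :=
    (TensorProduct.congr b.repr (LinearEquiv.refl k A)).trans
      (TensorProduct.finsuppScalarLeft k A (Module.Basis.ofVectorSpaceIndex k M)) with hE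
  have hcoord : ∀ (n : ℕ) i, E t i ∈ (Jaug k A) ^ n := by
    intro n i
    obtain ⟨s, rfl⟩ := ht n
    clear ht
    induction s using TensorProduct.induction_on with
    | zero => simp
    | tmul x w =>
        have : E (x ⊗ₜ[k] (w : A)) i = b.repr x i • (w : A) := by
          simp [hE, TensorProduct.congr_tmul]
        have h2 : lTensor M (Submodule.restrictScalars k ((Jaug k A) ^ n)).subtype
            (x ⊗ₜ[k] w) = x ⊗ₜ[k] (w : A) := rfl
        rw [h2, this]
        exact Submodule.smul_mem (Submodule.restrictScalars k ((Jaug k A) ^ n)) _ w.2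
    | add s t hs ht =>
        rw [map_add, map_add, Finsupp.add_apply]
        exact Ideal.add_mem _ hs ht
  have hzero : ∀ i, E t i = 0 := by
    intro i
    have : E t i ∈ ⨅ n : ℕ, (Jaug k A) ^ n :=
      (Submodule.mem_iInf _).mpr fun n => hcoord n i
    rw [hker] at this
    simpa using this
  have : E t = 0 := Finsupp.ext hzero
  exact (LinearEquiv.map_eq_zero_iff E).mp this

end Chunk5


section Chunk6

open LinearMap Coalgebra HopfAlgebra

variable (A : Type u) [CommRing A] [HopfAlgebra k A]
variable {M : Type u} [AddCommGroup M] [Module k M] {ρ : M →ₗ[k] M ⊗[k] A}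

lemma nu_mem_WSub (hρ : IsPartialComodule k A ρ) (m : M) :
    nuMap k A ρ m ∈ WSub k A (M := M) 1 := by
  have hexact := Module.Flat.lTensor_exact (R := k) M
    (LinearMap.exact_subtype_ker_map (Coalgebra.counit (R := k) (A := A)))
  have hkerc : LinearMap.ker (Coalgebra.counit (R := k) (A := A))
      = Submodule.restrictScalars k ((Jaug k A) ^ 1) := by
    ext h
    simp [Jaug, RingHom.mem_ker, pow_one, LinearMap.mem_ker,
      Bialgebra.counitAlgHom_apply]
  have hv : lTensor M (Coalgebra.counit (R := k) (A := A)) (nuMap k A ρ m) = 0 := by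
    have hc := LinearMap.congr_fun hρ.counit m
    simp only [LinearMap.coe_comp, Function.comp_apply, LinearMap.id_coe, id_eq,
      counitLast] at hc
    have h2 : lTensor M (Coalgebra.counit (R := k) (A := A)) (ρ m) = m ⊗ₜ[k] (1 : k) := by
      rw [← TensorProduct.rid_symm_apply, LinearEquiv.eq_symm_apply]
      exact hc
    have h3 : nuMap k A ρ m = ρ m - m ⊗ₜ[k] (1 : A) := by simp [nuMap]
    rw [h3, map_sub, h2, lTensor_tmul, Bialgebra.counit_one, sub_self]
  have hrange := (hexact (nuMap k A ρ m)).mp hv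
  obtain ⟨s, hs⟩ := hrange
  have hWS : WSub k A (M := M) 1
      = LinearMap.range (lTensor M (LinearMap.ker (Coalgebra.counit (R := k) (A := A))).subtype) := by
    rw [WSub, hkerc]
  rw [hWS]
  exact ⟨s, hs⟩

end Chunk6


/-- Over an algebraically closed field of characteristic `0`, if `H` is a
finitely generated commutative Hopf algebra whose augmentation ideal `ker ε` satisfies
`⋂ₙ (ker ε)ⁿ = 0` (e.g. `H = O(G)` for a connected linear algebraic group `G`), then every
partial `H`-comodule is global, i.e. its coaction is coassociative. -/
theorem partialComodule_global_of_connected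
    (k : Type u) [Field k] [IsAlgClosed k] [CharZero k]
    (H : Type u) [CommRing H] [HopfAlgebra k H]
    (hfg : Algebra.FiniteType k H)
    (hker : (⨅ n : ℕ, (RingHom.ker (Bialgebra.counitAlgHom k H)) ^ n) = ⊥)
    {M : Type u} [AddCommGroup M] [Module k M]
    (ρ : M →ₗ[k] M ⊗[k] H) (hρ : IsPartialComodule k H ρ) :
    comulLast k H M ∘ₗ ρ = LinearMap.rTensor H ρ ∘ₗ ρ := by
  have hg_mem : ∀ (n : ℕ) (m : M), gMap k H ρ m ∈ WSub k H (M := M) n := by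
    intro n
    induction n with
    | zero => exact fun m => mem_WSub_zero k H _
    | succ n ih =>
        intro m
        rw [g_apply k H hρ m]
        exact (WSub k H (M := M) (n + 1)).neg_mem
          (rTensor_g_mem_WSub k H ih (nu_mem_WSub k H hρ m))
  have hJ : (⨅ n : ℕ, (Jaug k H) ^ n) = ⊥ := by simpa [Jaug] using hker
  have hg0 : gMap k H ρ = 0 := by
    apply LinearMap.ext
    intro m
    have := eq_zero_of_mem_all_WSub k H hJ (fun n => hg_mem n m)
    simpa using this
  have he : eMap k H ρ = unitLast k H M := by
    have h := hg0
    rw [gMap, sub_eq_zero] at h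
    exact h
  have hP : PMap k H ρ = LinearMap.id := by
    rw [PMap, he, mulLast_rTensor_unitLast]
  rw [rTensor_rho_rho k H hρ, hP, LinearMap.rTensor_id, LinearMap.id_comp]

end
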